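/- Let h ∈ L²[0,1] be nonnegative, and suppose the series ḣ := Σ_{n≥1} ⟨h, ẽ_n⟩ ẽ_n' converges in L²[0,1], where ẽ₁(u)=1 and ẽ_k(u) = √2 cos(π(k−1)u) for k ≥ 2. Then ḣ · 𝟙{h = 0} = 0 almost everywhere on [0,1]. -/

import Mathlib

open MeasureTheory Filter Topology

/-- The Neumann cosine orthonormal basis of `L²[0,1]`: `ẽ₁ = 1`,
`ẽ_k(u) = √2 cos(π(k-1)u)` (indexed here from `k = 0`). -/
noncomputable def cosBasisFun (k : ℕ) : ℝ → ℝ :=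
  fun u => if k = 0 then 1 else Real.sqrt 2 * Real.cos (Real.pi * k * u)

/-- The derivative of `cosBasisFun k`. -/
noncomputable def cosBasisDeriv (k : ℕ) : ℝ → ℝ :=
  fun u => if k = 0 then 0 else -(Real.sqrt 2 * (Real.pi * k) * Real.sin (Real.pi * k * u))

lemma integral_cos_int (m : ℤ) :
    ∫ x in (0:ℝ)..1, Real.cos (Real.pi * m * x) = if m = 0 then 1 else 0 := by
  rcases eq_or_ne m 0 with rfl | hm
  · simp
  · have hc : (Real.pi * m) ≠ 0 := by
      simp [Real.pi_ne_zero, hm]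
    have : ∀ x ∈ Set.uIcc (0:ℝ) 1, HasDerivAt (fun y => Real.sin (Real.pi * m * y) / (Real.pi * m))
        (Real.cos (Real.pi * m * x)) x := by
      intro x _
      have h1 : HasDerivAt (fun y : ℝ => Real.pi * m * y) (Real.pi * m) x := by
        simpa using (hasDerivAt_id x).const_mul (Real.pi * m)
      have := (Real.hasDerivAt_sin (Real.pi * m * x)).comp x h1
      have h2 := this.div_const (Real.pi * m)
      simpa [mul_comm, mul_div_assoc, mul_div_cancel_left₀ _ hc] using h2
    rw [intervalIntegral.integral_eq_sub_of_hasDerivAt this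
      (by apply Continuous.intervalIntegrable; continuity)]
    have : Real.sin (Real.pi * m * 1) = 0 := by
      rw [mul_one, mul_comm]; exact Real.sin_int_mul_pi m
    simp only [mul_one] at this
    simp [this, hm]

lemma integral_cos_mul_cos_int (a b : ℤ) :
    ∫ x in (0:ℝ)..1, Real.cos (Real.pi * a * x) * Real.cos (Real.pi * b * x)
      = ((if a + b = 0 then (1:ℝ) else 0) + (if a - b = 0 then 1 else 0)) / 2 := by
  have key : ∀ x : ℝ, Real.cos (Real.pi * a * x) * Real.cos (Real.pi * b * x)
      = (Real.cos (Real.pi * ((a + b : ℤ) : ℝ) * x) + Real.cos (Real.pi * ((a - b : ℤ) : ℝ) * x)) / 2 := by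
    intro x
    have h1 := Real.cos_add (Real.pi * a * x) (Real.pi * b * x)
    have h2 := Real.cos_sub (Real.pi * a * x) (Real.pi * b * x)
    have e1 : Real.pi * (a + b : ℤ) * x = Real.pi * a * x + Real.pi * b * x := by push_cast; ring
    have e2 : Real.pi * (a - b : ℤ) * x = Real.pi * a * x - Real.pi * b * x := by push_cast; ring
    rw [e1, e2, h1, h2]; ring
  simp only [key]
  rw [intervalIntegral.integral_div]
  rw [intervalIntegral.integral_add
    (by apply Continuous.intervalIntegrable; continuity)
    (by apply Continuous.intervalIntegrable; continuity)]
  rw [integral_cos_int, integral_cos_int]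

lemma integral_cosBasisFun (j : ℕ) (hj : j ≠ 0) :
    ∫ x in (0:ℝ)..1, cosBasisFun j x = 0 := by
  simp only [cosBasisFun, if_neg hj]
  rw [intervalIntegral.integral_const_mul]
  have : ∀ x : ℝ, Real.cos (Real.pi * (j:ℝ) * x) = Real.cos (Real.pi * ((j:ℤ):ℝ) * x) := by
    intro x; norm_num
  simp only [this]
  rw [integral_cos_int]
  simp [hj]

lemma integral_cosBasisFun_mul (k j : ℕ) (hj : j ≠ 0) :
    ∫ x in (0:ℝ)..1, cosBasisFun k x * cosBasisFun j x = if k = j then 1 else 0 := by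
  rcases eq_or_ne k 0 with rfl | hk
  · have h0 : cosBasisFun 0 = fun _ : ℝ => (1:ℝ) := by funext u; simp [cosBasisFun]
    rw [h0]
    simp only [one_mul]
    rw [if_neg (fun h => hj h.symm)]
    exact integral_cosBasisFun j hj
  · simp only [cosBasisFun, if_neg hk, if_neg hj]
    have e : ∀ x : ℝ, (Real.sqrt 2 * Real.cos (Real.pi * k * x)) * (Real.sqrt 2 * Real.cos (Real.pi * j * x))
        = 2 * (Real.cos (Real.pi * ((k:ℤ):ℝ) * x) * Real.cos (Real.pi * ((j:ℤ):ℝ) * x)) := by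
      intro x
      have : Real.sqrt 2 * Real.sqrt 2 = 2 := Real.mul_self_sqrt (by norm_num)
      rw [show ((k:ℤ):ℝ) = (k:ℝ) by norm_num, show ((j:ℤ):ℝ) = (j:ℝ) by norm_num]
      linear_combination Real.cos (Real.pi * k * x) * Real.cos (Real.pi * j * x) * this
    simp only [e]
    rw [intervalIntegral.integral_const_mul, integral_cos_mul_cos_int]
    have hne : (k:ℤ) + j ≠ 0 := by positivity
    rw [if_neg hne]
    have : ((k:ℤ) - j = 0) ↔ (k = j) := by omega
    by_cases hkj : k = j
    · simp [this, hkj]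
    · rw [if_neg (by omega), if_neg hkj]; norm_num

lemma hasDerivAt_cosBasisFun (k : ℕ) (x : ℝ) :
    HasDerivAt (cosBasisFun k) (cosBasisDeriv k x) x := by
  rcases eq_or_ne k 0 with rfl | hk
  · rw [show cosBasisFun 0 = fun _ => (1:ℝ) from funext fun u => by simp [cosBasisFun]]
    simpa [cosBasisDeriv] using (hasDerivAt_const x (1:ℝ))
  · have hfun : cosBasisFun k = fun u => Real.sqrt 2 * Real.cos (Real.pi * k * u) := by
      funext u; simp [cosBasisFun, hk]
    rw [hfun]
    simp only [cosBasisDeriv, if_neg hk]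
    have h1 : HasDerivAt (fun y : ℝ => Real.pi * k * y) (Real.pi * k) x := by
      simpa using (hasDerivAt_id x).const_mul (Real.pi * (k:ℝ))
    have H := ((Real.hasDerivAt_cos (Real.pi * k * x)).comp x h1).const_mul (Real.sqrt 2)
    simp only [Function.comp] at H
    exact H.congr_deriv (by ring)

lemma continuous_cosBasisFun (k : ℕ) : Continuous (cosBasisFun k) := by
  unfold cosBasisFun; split <;> continuity

lemma continuous_cosBasisDeriv (k : ℕ) : Continuous (cosBasisDeriv k) := by
  unfold cosBasisDeriv; split <;> continuity

lemma abs_cosBasisFun_le (k : ℕ) (x : ℝ) : |cosBasisFun k x| ≤ Real.sqrt 2 := by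
  unfold cosBasisFun
  split
  · rw [abs_one]; nlinarith [Real.sq_sqrt (by norm_num : (2:ℝ) ≥ 0), Real.sqrt_nonneg 2]
  · rw [abs_mul, abs_of_nonneg (Real.sqrt_nonneg 2)]
    nlinarith [Real.abs_cos_le_one (Real.pi * k * x), Real.sqrt_nonneg 2]

local notation "μ01" => (volume.restrict (Set.Icc (0:ℝ) 1))

lemma isFiniteMeasure_mu01 : IsFiniteMeasure μ01 := by
  constructor
  rw [Measure.restrict_apply_univ, Real.volume_Icc]
  norm_num

lemma int01 (f : ℝ → ℝ) : ∫ x in (0:ℝ)..1, f x = ∫ x, f x ∂μ01 := by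
  rw [intervalIntegral.integral_of_le zero_le_one, ← integral_Icc_eq_integral_Ioc]

lemma cs_int {f : ℝ → ℝ} (hf : MemLp f 2 μ01) :
    ∫ x, |f x| ∂μ01 ≤ Real.sqrt (∫ x, (f x)^2 ∂μ01) := by
  haveI := isFiniteMeasure_mu01
  have h2 : ENNReal.ofReal (2:ℝ) = 2 := by norm_num
  have hone : MemLp (fun _ : ℝ => (1:ℝ)) (ENNReal.ofReal 2) μ01 := by
    rw [h2]; exact memLp_const 1
  have := integral_mul_norm_le_Lp_mul_Lq Real.HolderConjugate.two_two (h2 ▸ hf) hone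
    (μ := μ01)
  simp only [norm_one, mul_one, Real.norm_eq_abs] at this
  have e1 : ∫ x, |f x| ^ (2:ℝ) ∂μ01 = ∫ x, (f x)^2 ∂μ01 := by
    congr 1; funext x
    rw [show ((2:ℝ)) = ((2:ℕ):ℝ) by norm_num, Real.rpow_natCast, sq_abs]
  have e2 : ∫ x, (1:ℝ) ^ (2:ℝ) ∂μ01 = 1 := by
    simp only [Real.one_rpow]
    rw [integral_const]
    simp [Real.volume_Icc]
  rw [e1, e2] at this
  calc ∫ x, |f x| ∂μ01 ≤ (∫ x, (f x)^2 ∂μ01) ^ (1/(2:ℝ)) * 1 ^ (1/(2:ℝ)) := this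
    _ = Real.sqrt (∫ x, (f x)^2 ∂μ01) := by
        rw [Real.one_rpow, mul_one, Real.sqrt_eq_rpow]

lemma memℒp_of_continuous {f : ℝ → ℝ} (hf : Continuous f) : MemLp f 2 μ01 := by
  haveI := isFiniteMeasure_mu01
  obtain ⟨C, hC⟩ := (isCompact_Icc (a := (0:ℝ)) (b := 1)).exists_bound_of_continuousOn
    hf.continuousOn
  have : MemLp f ⊤ μ01 := by
    apply memLp_top_of_bound hf.aestronglyMeasurable C
    filter_upwards [ae_restrict_mem measurableSet_Icc] with x hx
    exact hC x hx
  exact this.mono_exponent le_top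

lemma coeff_lemma (f g : ℝ → ℝ)
    (hf : MemLp f 2 μ01) (hg : Integrable g volume) (hg2 : MemLp g 2 μ01)
    (hconv : Tendsto
      (fun n => ∫ u in (0:ℝ)..1,
        (∑ k ∈ Finset.range n,
            (∫ v in (0:ℝ)..1, f v * cosBasisFun k v) * cosBasisDeriv k u - g u) ^ 2)
      atTop (𝓝 0))
    (j : ℕ) (hj : j ≠ 0) :
    ∫ x in (0:ℝ)..1, (f x - ∫ t in (0:ℝ)..x, g t) * cosBasisFun j x = 0 := by
  haveI := isFiniteMeasure_mu01
  set c : ℕ → ℝ := fun k => ∫ v in (0:ℝ)..1, f v * cosBasisFun k v with hc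
  set S : ℕ → ℝ → ℝ := fun n u => ∑ k ∈ Finset.range n, c k * cosBasisDeriv k u with hS
  set H : ℝ → ℝ := fun x => ∫ t in (0:ℝ)..x, g t with hH
  set ε : ℕ → ℝ := fun n => ∫ u in (0:ℝ)..1, (S n u - g u)^2 with hε
  have contS : ∀ n, Continuous (S n) := by
    intro n
    exact continuous_finset_sum _ (fun k _ => continuous_const.mul (continuous_cosBasisDeriv k))
  have memD : ∀ n, MemLp (fun u => S n u - g u) 2 μ01 :=
    fun n => (memℒp_of_continuous (contS n)).sub hg2
  have intD : ∀ n, IntegrableOn (fun u => S n u - g u) (Set.Icc (0:ℝ) 1) volume := by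
    intro n
    exact ((contS n).integrableOn_Icc).sub hg.integrableOn
  -- step (iii) : uniform bound
  have key : ∀ n, ∀ x ∈ Set.Icc (0:ℝ) 1,
      |∫ t in (0:ℝ)..x, (S n t - g t)| ≤ Real.sqrt (ε n) := by
    intro n x hx
    have h1 : |∫ t in (0:ℝ)..x, (S n t - g t)|
        ≤ ∫ t in Set.Ioc (0:ℝ) x, |S n t - g t| := by
      rw [intervalIntegral.integral_of_le hx.1]
      calc |∫ t in Set.Ioc (0:ℝ) x, (S n t - g t)| = ‖∫ t in Set.Ioc (0:ℝ) x, (S n t - g t)‖ := (Real.norm_eq_abs _).symm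
        _ ≤ ∫ t in Set.Ioc (0:ℝ) x, ‖S n t - g t‖ := norm_integral_le_integral_norm _
        _ = ∫ t in Set.Ioc (0:ℝ) x, |S n t - g t| := by simp [Real.norm_eq_abs]
    have h2 : ∫ t in Set.Ioc (0:ℝ) x, |S n t - g t|
        ≤ ∫ t in Set.Icc (0:ℝ) 1, |S n t - g t| := by
      apply setIntegral_mono_set ((intD n).abs)
      · filter_upwards with t using abs_nonneg _
      · exact HasSubset.Subset.eventuallyLE (fun t ht => ⟨le_of_lt ht.1, le_trans ht.2 hx.2⟩)
    have h3 : ∫ t in Set.Icc (0:ℝ) 1, |S n t - g t| ≤ Real.sqrt (ε n) := by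
      have := cs_int (memD n)
      have he : ε n = ∫ u, (S n u - g u)^2 ∂μ01 := int01 _
      rw [he]
      exact this
    linarith
  -- FTC for partial sums
  have Tn_eq : ∀ n x, (∫ t in (0:ℝ)..x, S n t)
      = ∑ k ∈ Finset.range n, c k * (cosBasisFun k x - cosBasisFun k 0) := by
    intro n x
    rw [intervalIntegral.integral_finset_sum]
    · refine Finset.sum_congr rfl (fun k _ => ?_)
      rw [intervalIntegral.integral_const_mul]
      congr 1
      exact intervalIntegral.integral_eq_sub_of_hasDerivAt
        (fun t _ => hasDerivAt_cosBasisFun k t)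
        ((continuous_cosBasisDeriv k).intervalIntegrable _ _)
    · exact fun k _ => ((continuous_const.mul (continuous_cosBasisDeriv k)).intervalIntegrable _ _)
  -- interval integrability of basic pieces
  have ifj : IntervalIntegrable (fun x => f x * cosBasisFun j x) volume 0 1 := by
    apply IntervalIntegrable.mul_continuousOn
    · have h5 : IntegrableOn f (Set.Icc (0:ℝ) 1) volume := hf.integrable one_le_two
      apply IntegrableOn.intervalIntegrable
      rwa [Set.uIcc_of_le (zero_le_one (α := ℝ))]
    · exact (continuous_cosBasisFun j).continuousOn
  have Hcont : Continuous H := intervalIntegral.continuous_primitive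
    (fun a b => hg.intervalIntegrable) 0
  have Tncont : ∀ n, Continuous (fun x => ∫ t in (0:ℝ)..x, S n t) :=
    fun n => intervalIntegral.continuous_primitive (fun a b => (contS n).intervalIntegrable a b) 0
  -- pairing identity
  have P : ∀ n, j < n →
      (∫ x in (0:ℝ)..1, (∫ t in (0:ℝ)..x, S n t) * cosBasisFun j x) = c j := by
    intro n hn
    have e : (fun x => (∫ t in (0:ℝ)..x, S n t) * cosBasisFun j x)
        = fun x => ∑ k ∈ Finset.range n,
            c k * ((cosBasisFun k x - cosBasisFun k 0) * cosBasisFun j x) := by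
      funext x
      rw [Tn_eq n x, Finset.sum_mul]
      exact Finset.sum_congr rfl (fun k _ => by ring)
    rw [e, intervalIntegral.integral_finset_sum (fun k _ => by
      apply Continuous.intervalIntegrable
      exact continuous_const.mul (((continuous_cosBasisFun k).sub continuous_const).mul
        (continuous_cosBasisFun j)))]
    have term : ∀ k, (∫ x in (0:ℝ)..1,
        c k * ((cosBasisFun k x - cosBasisFun k 0) * cosBasisFun j x))
        = if k = j then c j else 0 := by
      intro k
      rw [intervalIntegral.integral_const_mul]
      have e2 : ∀ x:ℝ, (cosBasisFun k x - cosBasisFun k 0) * cosBasisFun j x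
          = cosBasisFun k x * cosBasisFun j x - cosBasisFun k 0 * cosBasisFun j x :=
        fun x => by ring
      simp only [e2]
      rw [intervalIntegral.integral_sub
        (by apply Continuous.intervalIntegrable
            exact (continuous_cosBasisFun k).mul (continuous_cosBasisFun j))
        (by apply Continuous.intervalIntegrable
            exact continuous_const.mul (continuous_cosBasisFun j)),
        intervalIntegral.integral_const_mul, integral_cosBasisFun_mul k j hj,
        integral_cosBasisFun j hj]
      by_cases hkj : k = j
      · subst hkj; simp
      · simp [hkj]
    simp only [term]
    rw [Finset.sum_ite_eq' (Finset.range n) j (fun _ => c j)]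
    rw [if_pos (Finset.mem_range.mpr hn)]
  -- the quantity we want to vanish
  set a : ℝ := ∫ x in (0:ℝ)..1, (f x - H x) * cosBasisFun j x with ha
  have habound : ∀ n, j < n → |a| ≤ Real.sqrt 2 * Real.sqrt (ε n) := by
    intro n hn
    have iHj : IntervalIntegrable (fun x => H x * cosBasisFun j x) volume 0 1 :=
      (Hcont.mul (continuous_cosBasisFun j)).intervalIntegrable _ _
    have iTj : IntervalIntegrable
        (fun x => (∫ t in (0:ℝ)..x, S n t) * cosBasisFun j x) volume 0 1 :=
      ((Tncont n).mul (continuous_cosBasisFun j)).intervalIntegrable _ _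
    have split : a = ∫ x in (0:ℝ)..1,
        ((∫ t in (0:ℝ)..x, S n t) - H x) * cosBasisFun j x := by
      have e3 : (fun x => (f x - H x) * cosBasisFun j x)
          = fun x => f x * cosBasisFun j x - H x * cosBasisFun j x := by
        funext x; ring
      have e4 : (fun x => ((∫ t in (0:ℝ)..x, S n t) - H x) * cosBasisFun j x)
          = fun x => (∫ t in (0:ℝ)..x, S n t) * cosBasisFun j x - H x * cosBasisFun j x := by
        funext x; ring
      rw [ha, e3, e4, intervalIntegral.integral_sub ifj iHj,
        intervalIntegral.integral_sub iTj iHj]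
      congr 1
      exact (P n hn).symm
    rw [split]
    have bnd : ∀ x ∈ Set.Icc (0:ℝ) 1,
        |((∫ t in (0:ℝ)..x, S n t) - H x) * cosBasisFun j x|
          ≤ Real.sqrt (ε n) * Real.sqrt 2 := by
      intro x hx
      rw [abs_mul]
      have h1 : |(∫ t in (0:ℝ)..x, S n t) - H x| ≤ Real.sqrt (ε n) := by
        have e5 : (∫ t in (0:ℝ)..x, S n t) - H x = ∫ t in (0:ℝ)..x, (S n t - g t) := by
          rw [intervalIntegral.integral_sub ((contS n).intervalIntegrable _ _)
            (hg.intervalIntegrable)]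
        rw [e5]
        exact key n x hx
      exact mul_le_mul h1 (abs_cosBasisFun_le j x) (abs_nonneg _)
        (Real.sqrt_nonneg _)
    calc |∫ x in (0:ℝ)..1, ((∫ t in (0:ℝ)..x, S n t) - H x) * cosBasisFun j x|
        ≤ ∫ x in (0:ℝ)..1, |((∫ t in (0:ℝ)..x, S n t) - H x) * cosBasisFun j x| :=
          intervalIntegral.abs_integral_le_integral_abs zero_le_one
      _ ≤ ∫ x in (0:ℝ)..1, Real.sqrt (ε n) * Real.sqrt 2 := by
          apply intervalIntegral.integral_mono_on zero_le_one
          · exact (((Tncont n).sub Hcont).mul (continuous_cosBasisFun j)).abs.intervalIntegrable _ _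
          · exact intervalIntegrable_const
          · exact bnd
      _ = Real.sqrt (ε n) * Real.sqrt 2 := by simp
      _ = Real.sqrt 2 * Real.sqrt (ε n) := mul_comm _ _
  have hsq : Tendsto (fun n => Real.sqrt 2 * Real.sqrt (ε n)) atTop (𝓝 0) := by
    have h1 : Tendsto (fun n => Real.sqrt (ε n)) atTop (𝓝 0) := by
      have := (Real.continuous_sqrt.tendsto 0).comp hconv
      simpa [Function.comp_def] using this
    simpa using h1.const_mul (Real.sqrt 2)
  have habs : |a| ≤ 0 := by
    apply ge_of_tendsto hsq
    filter_upwards [eventually_gt_atTop j] with n hn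
    exact habound n hn
  exact abs_eq_zero.mp (le_antisymm habs (abs_nonneg a))

lemma sw_lemma (K : ℝ → ℝ) (iK : IntervalIntegrable K volume 0 1)
    (hK : ∀ j : ℕ, ∫ x in (0:ℝ)..1, K x * Real.cos (Real.pi * j * x) = 0)
    (f : ℝ → ℝ) (hf : Continuous f) :
    ∫ x in (0:ℝ)..1, K x * f x = 0 := by
  have iKmul : ∀ (φ : ℝ → ℝ), Continuous φ →
      IntervalIntegrable (fun x => K x * φ x) volume 0 1 :=
    fun φ hφ => iK.mul_continuousOn hφ.continuousOn
  -- extend to integer indices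
  have hKZ : ∀ j : ℤ, ∫ x in (0:ℝ)..1, K x * Real.cos (Real.pi * j * x) = 0 := by
    intro j
    obtain ⟨n, rfl | rfl⟩ := j.eq_nat_or_neg
    · push_cast
      exact hK n
    · push_cast
      simp only [show ∀ x:ℝ, Real.pi * -(n:ℝ) * x = -(Real.pi * (n:ℝ) * x) from fun x => by ring,
        Real.cos_neg]
      exact hK n
  -- powers of cos (π x)
  have pow : ∀ m : ℕ, ∀ j : ℤ,
      ∫ x in (0:ℝ)..1, K x * (Real.cos (Real.pi * j * x) * Real.cos (Real.pi * x) ^ m) = 0 := by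
    intro m
    induction m with
    | zero => intro j; simpa using hKZ j
    | succ m ih =>
      intro j
      have trig : ∀ x : ℝ, Real.cos (Real.pi * j * x) * Real.cos (Real.pi * x) ^ (m+1)
          = (1/2) * (Real.cos (Real.pi * ((j+1 : ℤ):ℝ) * x) * Real.cos (Real.pi * x) ^ m)
            + (1/2) * (Real.cos (Real.pi * ((j-1 : ℤ):ℝ) * x) * Real.cos (Real.pi * x) ^ m) := by
        intro x
        have e1 : Real.pi * ((j+1 : ℤ):ℝ) * x = Real.pi * j * x + Real.pi * x := by
          push_cast; ring
        have e2 : Real.pi * ((j-1 : ℤ):ℝ) * x = Real.pi * j * x - Real.pi * x := by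
          push_cast; ring
        rw [e1, e2, Real.cos_add, Real.cos_sub]
        ring
      have e3 : (fun x => K x * (Real.cos (Real.pi * j * x) * Real.cos (Real.pi * x) ^ (m+1)))
          = fun x => (1/2) * (K x * (Real.cos (Real.pi * ((j+1 : ℤ):ℝ) * x) * Real.cos (Real.pi * x) ^ m))
            + (1/2) * (K x * (Real.cos (Real.pi * ((j-1 : ℤ):ℝ) * x) * Real.cos (Real.pi * x) ^ m)) := by
        funext x
        rw [trig x]
        ring
      rw [e3, intervalIntegral.integral_add, intervalIntegral.integral_const_mul,
        intervalIntegral.integral_const_mul, ih (j+1), ih (j-1)]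
      · push_cast
        ring
      · apply IntervalIntegrable.const_mul
        apply iKmul
        exact (Real.continuous_cos.comp (continuous_const.mul continuous_id)).mul
          ((Real.continuous_cos.comp (continuous_const.mul continuous_id)).pow m)
      · apply IntervalIntegrable.const_mul
        apply iKmul
        exact (Real.continuous_cos.comp (continuous_const.mul continuous_id)).mul
          ((Real.continuous_cos.comp (continuous_const.mul continuous_id)).pow m)
  -- integral against any polynomial in cos (π x)
  have poly : ∀ P : Polynomial ℝ,
      ∫ x in (0:ℝ)..1, K x * Polynomial.eval (Real.cos (Real.pi * x)) P = 0 := by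
    intro P
    have e4 : (fun x => K x * Polynomial.eval (Real.cos (Real.pi * x)) P)
        = fun x => ∑ i ∈ Finset.range (P.natDegree + 1),
            P.coeff i * (K x * Real.cos (Real.pi * x) ^ i) := by
      funext x
      rw [Polynomial.eval_eq_sum_range, Finset.mul_sum]
      exact Finset.sum_congr rfl (fun i _ => by ring)
    rw [e4, intervalIntegral.integral_finset_sum (fun i _ => by
      apply IntervalIntegrable.const_mul
      apply iKmul
      exact (Real.continuous_cos.comp (continuous_const.mul continuous_id)).pow i)]
    apply Finset.sum_eq_zero
    intro i _
    rw [intervalIntegral.integral_const_mul]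
    have := pow i 0
    simp only [Int.cast_zero, mul_zero, zero_mul, Real.cos_zero, one_mul] at this
    rw [this, mul_zero]
  -- Stone–Weierstrass
  set X := Set.Icc (0:ℝ) 1
  let q : C(X, ℝ) := ⟨fun x => Real.cos (Real.pi * (x:ℝ)), by continuity⟩
  set A : Subalgebra ℝ C(X, ℝ) := Algebra.adjoin ℝ {q} with hA
  have hsep : A.SeparatesPoints := by
    intro x y hxy
    refine ⟨_, ⟨q, Algebra.subset_adjoin (Set.mem_singleton q), rfl⟩, ?_⟩
    simp only [q, ContinuousMap.coe_mk]
    intro hcos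
    apply hxy
    have hx : Real.pi * (x:ℝ) ∈ Set.Icc 0 Real.pi := by
      constructor
      · exact mul_nonneg Real.pi_pos.le x.2.1
      · nlinarith [x.2.2, Real.pi_pos]
    have hy : Real.pi * (y:ℝ) ∈ Set.Icc 0 Real.pi := by
      constructor
      · exact mul_nonneg Real.pi_pos.le y.2.1
      · nlinarith [y.2.2, Real.pi_pos]
    have := Real.injOn_cos hx hy hcos
    have hxy2 : (x:ℝ) = (y:ℝ) := by
      have := mul_left_cancel₀ Real.pi_ne_zero this
      exact this
    exact Subtype.ext hxy2
  have hdense : A.topologicalClosure = ⊤ :=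
    ContinuousMap.subalgebra_topologicalClosure_eq_top_of_separatesPoints A hsep
  let fX : C(X, ℝ) := ⟨fun x => f (x:ℝ), by continuity⟩
  have hmem : fX ∈ closure (A : Set C(X, ℝ)) := by
    have : fX ∈ A.topologicalClosure := by rw [hdense]; trivial
    exact this
  -- conclude by approximation
  set I := ∫ x in (0:ℝ)..1, K x * f x with hI
  set C := ∫ x in (0:ℝ)..1, |K x| with hC
  have hC0 : 0 ≤ C := by
    rw [hC]
    apply intervalIntegral.integral_nonneg zero_le_one
    intro x _; exact abs_nonneg _
  have hbound : ∀ ε : ℝ, 0 < ε → |I| ≤ ε * C := by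
    intro ε hε
    obtain ⟨p, hpA, hdist⟩ := Metric.mem_closure_iff.mp hmem ε hε
    obtain ⟨P, hP⟩ : ∃ P : Polynomial ℝ, Polynomial.aeval q P = p := by
      have := hpA
      rw [hA, Algebra.adjoin_singleton_eq_range_aeval] at this
      obtain ⟨P, hP⟩ := this
      exact ⟨P, hP⟩
    have hpeval : ∀ x : X, p x = Polynomial.eval (Real.cos (Real.pi * (x:ℝ))) P := by
      intro x
      rw [← hP, Polynomial.aeval_continuousMap_apply]
      rfl
    have contP : Continuous (fun x : ℝ => Polynomial.eval (Real.cos (Real.pi * x)) P) := by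
      exact P.continuous.comp (Real.continuous_cos.comp (continuous_const.mul continuous_id))
    have hsplit : I = ∫ x in (0:ℝ)..1,
        K x * (f x - Polynomial.eval (Real.cos (Real.pi * x)) P) := by
      have e5 : (fun x => K x * (f x - Polynomial.eval (Real.cos (Real.pi * x)) P))
          = fun x => K x * f x - K x * Polynomial.eval (Real.cos (Real.pi * x)) P := by
        funext x; ring
      rw [e5, intervalIntegral.integral_sub (iKmul f hf) (iKmul _ contP), poly P, sub_zero, hI]
    rw [hsplit]
    calc |∫ x in (0:ℝ)..1, K x * (f x - Polynomial.eval (Real.cos (Real.pi * x)) P)|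
        ≤ ∫ x in (0:ℝ)..1, |K x * (f x - Polynomial.eval (Real.cos (Real.pi * x)) P)| :=
          intervalIntegral.abs_integral_le_integral_abs zero_le_one
      _ ≤ ∫ x in (0:ℝ)..1, ε * |K x| := by
          apply intervalIntegral.integral_mono_on zero_le_one
          · exact (iKmul _ (hf.sub contP)).abs
          · exact iK.abs.const_mul ε
          · intro x hx
            rw [abs_mul]
            have : |f x - Polynomial.eval (Real.cos (Real.pi * x)) P| ≤ ε := by
              have h6 := ContinuousMap.dist_apply_le_dist (f := fX) (g := p) (⟨x, hx⟩ : X)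
              rw [hpeval ⟨x, hx⟩] at h6
              have : dist (f x) (Polynomial.eval (Real.cos (Real.pi * x)) P) ≤ dist fX p :=
                h6
              rw [Real.dist_eq] at this
              linarith [le_of_lt hdist]
            calc |K x| * |f x - Polynomial.eval (Real.cos (Real.pi * x)) P|
                ≤ |K x| * ε := by
                  exact mul_le_mul_of_nonneg_left this (abs_nonneg _)
              _ = ε * |K x| := mul_comm _ _
      _ = ε * C := by
          rw [← intervalIntegral.integral_const_mul]
  by_contra hne
  have hpos : 0 < |I| := abs_pos.mpr hne
  have := hbound (|I| / (2 * (C + 1))) (by positivity)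
  have hlt : |I| / (2 * (C + 1)) * C < |I| := by
    rw [div_mul_eq_mul_div, div_lt_iff₀ (by positivity)]
    nlinarith
  linarith

lemma nonneg_of_ae {F : ℝ → ℝ} (hF : Continuous F) (hae : ∀ᵐ x ∂μ01, 0 ≤ F x) :
    ∀ x ∈ Set.Icc (0:ℝ) 1, 0 ≤ F x := by
  intro x0 hx0
  by_contra hneg
  push_neg at hneg
  have hU : IsOpen {y : ℝ | F y < 0} := isOpen_lt hF continuous_const
  obtain ⟨r, hr, hball⟩ := Metric.isOpen_iff.mp hU x0 hneg
  rw [Real.ball_eq_Ioo] at hball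
  set aa := max 0 (x0 - r) with haa
  set bb := min 1 (x0 + r) with hbb
  have hab : aa < bb := by
    rw [haa, hbb]
    apply max_lt <;> apply lt_min
    · norm_num
    · linarith [hx0.1]
    · linarith [hx0.2]
    · linarith
  have hsub : Set.Ioo aa bb ⊆ {y : ℝ | ¬ 0 ≤ F y} := by
    intro y hy
    have h1 : y ∈ Set.Ioo (x0 - r) (x0 + r) := by
      constructor
      · exact lt_of_le_of_lt (le_max_right _ _) hy.1
      · exact lt_of_lt_of_le hy.2 (min_le_right _ _)
    exact not_le.mpr (hball h1)
  have hIccsub : Set.Ioo aa bb ⊆ Set.Icc (0:ℝ) 1 := by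
    intro y hy
    constructor
    · exact le_of_lt (lt_of_le_of_lt (le_max_left _ _) hy.1)
    · exact le_of_lt (lt_of_lt_of_le hy.2 (min_le_left _ _))
  have hzero : μ01 {y : ℝ | ¬ 0 ≤ F y} = 0 := hae
  have hpos : 0 < μ01 (Set.Ioo aa bb) := by
    rw [Measure.restrict_apply measurableSet_Ioo,
      Set.inter_eq_self_of_subset_left hIccsub, Real.volume_Ioo]
    simp only [ENNReal.ofReal_pos]
    linarith
  have := measure_mono_null hsub hzero
  rw [this] at hpos
  exact lt_irrefl 0 hpos

lemma lebesgue_pts (g : ℝ → ℝ) (hg : Integrable g volume) :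
    ∀ᵐ u ∂(volume : Measure ℝ),
      Tendsto (fun y => ⨍ t in Set.Icc u y, |g t - g u|) (𝓝[>] u) (𝓝 0) ∧
      Tendsto (fun y => ⨍ t in Set.Icc y u, |g t - g u|) (𝓝[<] u) (𝓝 0) := by
  filter_upwards [(IsUnifLocDoublingMeasure.vitaliFamily (volume : Measure ℝ)
      1).ae_tendsto_average_norm_sub hg.locallyIntegrable] with u hu
  constructor
  · have := hu.comp (Real.tendsto_Icc_vitaliFamily_right u)
    simpa [Real.norm_eq_abs, Function.comp_def] using this
  · have := hu.comp (Real.tendsto_Icc_vitaliFamily_left u)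
    simpa [Real.norm_eq_abs, Function.comp_def] using this

lemma right_avg (g : ℝ → ℝ) (hg : Integrable g volume) (u : ℝ)
    (hleb : Tendsto (fun y => ⨍ t in Set.Icc u y, |g t - g u|) (𝓝[>] u) (𝓝 0)) :
    Tendsto (fun y => (y - u)⁻¹ * ∫ t in u..y, g t) (𝓝[>] u) (𝓝 (g u)) := by
  rw [tendsto_iff_dist_tendsto_zero]
  apply squeeze_zero' (Filter.Eventually.of_forall fun y => dist_nonneg) _ hleb
  filter_upwards [self_mem_nhdsWithin] with y hy
  replace hy : u < y := hy
  have hyu : (0:ℝ) < y - u := by linarith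
  have hInt : IntegrableOn (fun t => |g t - g u|) (Set.Icc u y) volume := by
    apply Integrable.abs
    exact hg.integrableOn.sub (integrableOn_const (by
      rw [Real.volume_Icc]; exact ENNReal.ofReal_ne_top))
  have e1 : (y - u)⁻¹ * (∫ t in u..y, g t) - g u
      = (y - u)⁻¹ * ∫ t in u..y, (g t - g u) := by
    rw [intervalIntegral.integral_sub hg.intervalIntegrable intervalIntegrable_const,
      intervalIntegral.integral_const, smul_eq_mul]
    field_simp
  have e2 : ⨍ t in Set.Icc u y, |g t - g u| = (y - u)⁻¹ * ∫ t in Set.Icc u y, |g t - g u| := by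
    rw [setAverage_eq, Real.volume_real_Icc_of_le hy.le, smul_eq_mul]
  rw [Real.dist_eq, e1, e2, abs_mul, abs_of_pos (inv_pos.mpr hyu)]
  apply mul_le_mul_of_nonneg_left _ (inv_pos.mpr hyu).le
  calc |∫ t in u..y, (g t - g u)| ≤ ∫ t in Set.Ioc u y, |g t - g u| := by
        rw [intervalIntegral.integral_of_le hy.le]
        calc |∫ t in Set.Ioc u y, (g t - g u)| = ‖∫ t in Set.Ioc u y, (g t - g u)‖ :=
            (Real.norm_eq_abs _).symm
          _ ≤ ∫ t in Set.Ioc u y, ‖g t - g u‖ := norm_integral_le_integral_norm _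
          _ = ∫ t in Set.Ioc u y, |g t - g u| := by simp [Real.norm_eq_abs]
    _ ≤ ∫ t in Set.Icc u y, |g t - g u| := by
        apply setIntegral_mono_set hInt
        · filter_upwards with t using abs_nonneg _
        · exact HasSubset.Subset.eventuallyLE Set.Ioc_subset_Icc_self

lemma left_avg (g : ℝ → ℝ) (hg : Integrable g volume) (u : ℝ)
    (hleb : Tendsto (fun y => ⨍ t in Set.Icc y u, |g t - g u|) (𝓝[<] u) (𝓝 0)) :
    Tendsto (fun y => (u - y)⁻¹ * ∫ t in y..u, g t) (𝓝[<] u) (𝓝 (g u)) := by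
  rw [tendsto_iff_dist_tendsto_zero]
  apply squeeze_zero' (Filter.Eventually.of_forall fun y => dist_nonneg) _ hleb
  filter_upwards [self_mem_nhdsWithin] with y hy
  replace hy : y < u := hy
  have hyu : (0:ℝ) < u - y := by linarith
  have hInt : IntegrableOn (fun t => |g t - g u|) (Set.Icc y u) volume := by
    apply Integrable.abs
    exact hg.integrableOn.sub (integrableOn_const (by
      rw [Real.volume_Icc]; exact ENNReal.ofReal_ne_top))
  have e1 : (u - y)⁻¹ * (∫ t in y..u, g t) - g u
      = (u - y)⁻¹ * ∫ t in y..u, (g t - g u) := by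
    rw [intervalIntegral.integral_sub hg.intervalIntegrable intervalIntegrable_const,
      intervalIntegral.integral_const, smul_eq_mul]
    field_simp
  have e2 : ⨍ t in Set.Icc y u, |g t - g u| = (u - y)⁻¹ * ∫ t in Set.Icc y u, |g t - g u| := by
    rw [setAverage_eq, Real.volume_real_Icc_of_le hy.le, smul_eq_mul]
  rw [Real.dist_eq, e1, e2, abs_mul, abs_of_pos (inv_pos.mpr hyu)]
  apply mul_le_mul_of_nonneg_left _ (inv_pos.mpr hyu).le
  calc |∫ t in y..u, (g t - g u)| ≤ ∫ t in Set.Ioc y u, |g t - g u| := by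
        rw [intervalIntegral.integral_of_le hy.le]
        calc |∫ t in Set.Ioc y u, (g t - g u)| = ‖∫ t in Set.Ioc y u, (g t - g u)‖ :=
            (Real.norm_eq_abs _).symm
          _ ≤ ∫ t in Set.Ioc y u, ‖g t - g u‖ := norm_integral_le_integral_norm _
          _ = ∫ t in Set.Ioc y u, |g t - g u| := by simp [Real.norm_eq_abs]
    _ ≤ ∫ t in Set.Icc y u, |g t - g u| := by
        apply setIntegral_mono_set hInt
        · filter_upwards with t using abs_nonneg _
        · exact HasSubset.Subset.eventuallyLE Set.Ioc_subset_Icc_self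


/-- Let `h ∈ L²[0,1]` be nonnegative, and suppose the series
`ḣ = ∑ₙ ⟨h, ẽₙ⟩ ẽₙ'` converges in `L²[0,1]` (cosine basis `ẽ`).  Then `ḣ · 𝟙{h = 0} = 0`
almost everywhere on `[0,1]`. -/
theorem weak_derivative_vanishes_on_zero_set
    (h hdot : ℝ → ℝ)
    (hpos : ∀ u ∈ Set.Icc (0:ℝ) 1, 0 ≤ h u)
    (hh : MemLp h 2 (volume.restrict (Set.Icc (0:ℝ) 1)))
    (hhdot : MemLp hdot 2 (volume.restrict (Set.Icc (0:ℝ) 1)))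
    (hconv : Tendsto
      (fun n => ∫ u in (0:ℝ)..1,
        (∑ k ∈ Finset.range n,
            (∫ v in (0:ℝ)..1, h v * cosBasisFun k v) * cosBasisDeriv k u - hdot u) ^ 2)
      atTop (𝓝 0)) :
    ∀ᵐ u ∂(volume.restrict (Set.Icc (0:ℝ) 1)), h u = 0 → hdot u = 0 := by

  haveI := isFiniteMeasure_mu01
  set g0 : ℝ → ℝ := (Set.Icc (0:ℝ) 1).indicator hdot with hg0def
  have hg0eq : ∀ u ∈ Set.Icc (0:ℝ) 1, g0 u = hdot u :=
    fun u hu => Set.indicator_of_mem hu hdot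
  have hdotint : Integrable hdot μ01 := hhdot.integrable one_le_two
  have hg0int : Integrable g0 volume := by
    rw [hg0def, MeasureTheory.integrable_indicator_iff measurableSet_Icc]
    exact hdotint
  have hg0mem : MemLp g0 2 μ01 := by
    apply hhdot.ae_eq
    filter_upwards [ae_restrict_mem measurableSet_Icc] with u hu
    exact (hg0eq u hu).symm
  have hconv' : Tendsto
      (fun n => ∫ u in (0:ℝ)..1,
        (∑ k ∈ Finset.range n,
            (∫ v in (0:ℝ)..1, h v * cosBasisFun k v) * cosBasisDeriv k u - g0 u) ^ 2)
      atTop (𝓝 0) := by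
    have e : ∀ n, (∫ u in (0:ℝ)..1,
        (∑ k ∈ Finset.range n,
            (∫ v in (0:ℝ)..1, h v * cosBasisFun k v) * cosBasisDeriv k u - g0 u) ^ 2)
        = ∫ u in (0:ℝ)..1,
        (∑ k ∈ Finset.range n,
            (∫ v in (0:ℝ)..1, h v * cosBasisFun k v) * cosBasisDeriv k u - hdot u) ^ 2 := by
      intro n
      apply intervalIntegral.integral_congr
      intro u hu
      rw [Set.uIcc_of_le (zero_le_one (α := ℝ))] at hu
      show (_ - g0 u)^2 = (_ - hdot u)^2
      rw [hg0eq u hu]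
    simpa only [e] using hconv
  have coeff := coeff_lemma h g0 hh hg0int hg0mem hconv'
  set H : ℝ → ℝ := fun x => ∫ t in (0:ℝ)..x, g0 t with hHdef
  have Hcont : Continuous H := intervalIntegral.continuous_primitive
    (fun a b => hg0int.intervalIntegrable) 0
  have ih : IntervalIntegrable h volume 0 1 := by
    have h5 : IntegrableOn h (Set.Icc (0:ℝ) 1) volume := hh.integrable one_le_two
    apply IntegrableOn.intervalIntegrable
    rwa [Set.uIcc_of_le (zero_le_one (α := ℝ))]
  have ihH : IntervalIntegrable (fun x => h x - H x) volume 0 1 :=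
    ih.sub (Hcont.intervalIntegrable _ _)
  set c0 : ℝ := ∫ x in (0:ℝ)..1, (h x - H x) with hc0
  set K : ℝ → ℝ := fun x => h x - H x - c0 with hK
  have iK : IntervalIntegrable K volume 0 1 := ihH.sub intervalIntegrable_const
  -- all cosine coefficients of K vanish
  have hKcos : ∀ j : ℕ, ∫ x in (0:ℝ)..1, K x * Real.cos (Real.pi * j * x) = 0 := by
    intro j
    rcases eq_or_ne j 0 with rfl | hj
    · simp only [Nat.cast_zero, mul_zero, zero_mul, Real.cos_zero, mul_one]
      rw [hK]
      have : (fun x => h x - H x - c0) = fun x => (h x - H x) - c0 := rfl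
      rw [this, intervalIntegral.integral_sub ihH intervalIntegrable_const,
        intervalIntegral.integral_const]
      rw [← hc0]
      simp
    · have hbase := coeff j hj
      have e6 : (fun x => (h x - H x) * cosBasisFun j x)
          = fun x => Real.sqrt 2 * ((h x - H x) * Real.cos (Real.pi * j * x)) := by
        funext x
        simp only [cosBasisFun, if_neg hj]
        ring
      rw [e6, intervalIntegral.integral_const_mul] at hbase
      have h2 : Real.sqrt 2 ≠ 0 := by positivity
      have hcoe : ∫ x in (0:ℝ)..1, (h x - H x) * Real.cos (Real.pi * j * x) = 0 := by
        rcases mul_eq_zero.mp hbase with h' | h'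
        · exact absurd h' h2
        · exact h'
      have e7 : (fun x => K x * Real.cos (Real.pi * j * x))
          = fun x => (h x - H x) * Real.cos (Real.pi * j * x)
            - c0 * Real.cos (Real.pi * j * x) := by
        funext x; rw [hK]; ring
      rw [e7, intervalIntegral.integral_sub
        (ihH.mul_continuousOn (by fun_prop : Continuous fun x : ℝ =>
          Real.cos (Real.pi * j * x)).continuousOn)
        (intervalIntegrable_const.mul_continuousOn (by fun_prop : Continuous fun x : ℝ =>
          Real.cos (Real.pi * j * x)).continuousOn),
        hcoe, intervalIntegral.integral_const_mul]
      have : ∫ x in (0:ℝ)..1, Real.cos (Real.pi * (j:ℝ) * x) = 0 := by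
        have := integral_cos_int (j : ℤ)
        rw [if_neg (by exact_mod_cast hj)] at this
        push_cast at this
        exact this
      rw [this]
      ring
  -- K vanishes almost everywhere
  have KInt : Integrable K μ01 := by
    apply Integrable.sub _ (integrable_const c0)
    exact (hh.integrable one_le_two).sub Hcont.integrableOn_Icc
  have Kae : ∀ᵐ x ∂μ01, K x = 0 := by
    apply ae_eq_zero_of_integral_contDiff_smul_eq_zero KInt.locallyIntegrable
    intro ψ hψ hψc
    have e8 : ∀ x : ℝ, ψ x • K x = K x * ψ x := fun x => by
      rw [smul_eq_mul, mul_comm]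
    calc ∫ x, ψ x • K x ∂μ01 = ∫ x, K x * ψ x ∂μ01 := by simp only [e8]
      _ = ∫ x in (0:ℝ)..1, K x * ψ x := (int01 _).symm
      _ = 0 := sw_lemma K iK hKcos ψ hψ.continuous
  -- F = H + c0 is a nonnegative continuous version of h
  set F : ℝ → ℝ := fun y => H y + c0 with hF
  have Fcont : Continuous F := Hcont.add continuous_const
  have hFpos : ∀ x ∈ Set.Icc (0:ℝ) 1, 0 ≤ F x := by
    apply nonneg_of_ae Fcont
    filter_upwards [Kae, ae_restrict_mem measurableSet_Icc] with x hKx hx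
    have hFx : F x = h x := by
      show H x + c0 = h x
      simp only [hK] at hKx
      linarith
    rw [hFx]
    exact hpos x hx
  -- a.e. interior point
  have hIooAE : ∀ᵐ u ∂μ01, u ∈ Set.Ioo (0:ℝ) 1 := by
    have h01 : volume ({0, 1} : Set ℝ) = 0 := by
      apply measure_union_null <;> exact Real.volume_singleton
    have h2 : ∀ᵐ u ∂(volume : Measure ℝ), u ∉ ({0, 1} : Set ℝ) :=
      measure_eq_zero_iff_ae_notMem.mp h01
    filter_upwards [ae_restrict_of_ae h2, ae_restrict_mem measurableSet_Icc] with u hu hu2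
    simp only [Set.mem_insert_iff, Set.mem_singleton_iff, not_or] at hu
    exact ⟨lt_of_le_of_ne hu2.1 (Ne.symm hu.1), lt_of_le_of_ne hu2.2 hu.2⟩
  -- conclude
  filter_upwards [Kae, ae_restrict_of_ae (lebesgue_pts g0 hg0int), hIooAE,
    ae_restrict_mem measurableSet_Icc] with u hKu hleb hIoo hIcc hu0
  have hFu : F u = 0 := by
    show H u + c0 = 0
    simp only [hK] at hKu
    rw [hu0] at hKu
    linarith
  -- interval integral relations
  have hadd : ∀ y : ℝ, ∫ t in u..y, g0 t = F y - F u := by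
    intro y
    have := intervalIntegral.integral_add_adjacent_intervals
      (hg0int.intervalIntegrable (a := 0) (b := u)) (hg0int.intervalIntegrable (a := u) (b := y))
    rw [hF, hHdef]
    simp only []
    linarith [this]
  -- right limit gives g0 u ≥ 0
  have hright : 0 ≤ g0 u := by
    apply ge_of_tendsto (right_avg g0 hg0int u hleb.1)
    filter_upwards [Ioc_mem_nhdsGT_of_mem ⟨le_refl u, hIoo.2⟩] with y hy
    have h9 : (0:ℝ) < y - u := by linarith [hy.1]
    apply mul_nonneg (inv_pos.mpr h9).le
    rw [hadd y, hFu, sub_zero]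
    exact hFpos y ⟨by linarith [hIoo.1, hy.1], hy.2⟩
  -- left limit gives g0 u ≤ 0
  have hleft : g0 u ≤ 0 := by
    apply le_of_tendsto (left_avg g0 hg0int u hleb.2)
    filter_upwards [Ico_mem_nhdsLT_of_mem ⟨hIoo.1, le_refl u⟩] with y hy
    have h9 : (0:ℝ) < u - y := by linarith [hy.2]
    have h10 : ∫ t in y..u, g0 t = F u - F y := by
      have h11 := hadd y
      rw [intervalIntegral.integral_symm u y, h11]
      ring
    apply mul_nonpos_of_nonneg_of_nonpos (inv_pos.mpr h9).le
    rw [h10, hFu, zero_sub]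
    simp only [neg_nonpos]
    exact hFpos y ⟨hy.1, by linarith [hIoo.2, hy.2]⟩
  have : g0 u = 0 := le_antisymm hleft hright
  rw [← hg0eq u hIcc]
  exact this
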